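/- arXiv:0809.2414 — 2 statements merged into one kernel-verified Lean document; each statement's English description precedes it below -/
import Mathlib

section
/- If a capacitated tree (T,m) admits an inversion function I, then the Coxeter-like complex Delta_{(T,m)} is shellable; more precisely, listing the facets of Delta_{(T,m)} (identified with the labellings of (T,m)) in any linear extension of the weak order <=_weak associated to I yields a shelling of Delta_{(T,m)}. -/
set_option linter.unusedSectionVars false

open scoped Classical

noncomputable section

variable {V : Type} [Fintype V] [DecidableEq V]

/-- The connected components of `G` with the edges in `D` deleted; these are the
vertices of the contracted tree of `(G, D)`. -/
abbrev Comp (G : SimpleGraph V) (D : Finset (Sym2 V)) : Type _ :=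
  (G.deleteEdges (D : Set (Sym2 V))).ConnectedComponent

/-- The component of a vertex. -/
def compMk (G : SimpleGraph V) (D : Finset (Sym2 V)) (v : V) : Comp G D :=
  (G.deleteEdges (D : Set (Sym2 V))).connectedComponentMk v

/-- Coarsening map on components induced by shrinking the deleted edge set. -/
def compMap (G : SimpleGraph V) {D' D : Finset (Sym2 V)} (h : D' ⊆ D) :
    Comp G D → Comp G D' :=
  SimpleGraph.ConnectedComponent.map
    (SimpleGraph.Hom.ofLE (SimpleGraph.deleteEdges_anti (Finset.coe_subset.mpr h)))

/-- The capacity of a component: the sum of the capacities of its vertices. -/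
def cap (G : SimpleGraph V) (m : V → ℕ) (D : Finset (Sym2 V)) (c : Comp G D) : ℕ :=
  ∑ v ∈ Finset.univ.filter (fun v => compMk G D v = c), m v

/-- A labelling of the contracted tree of `(G, D)`: each label in `Fin N` is assigned
to a component, and each component receives exactly its capacity many labels. -/
structure Labelling (G : SimpleGraph V) (m : V → ℕ) (N : ℕ) (D : Finset (Sym2 V)) where
  g : Fin N → Comp G D
  balanced : ∀ c : Comp G D,
    (Finset.univ.filter (fun i => g i = c)).card = cap G m D c

/-- A face of the Coxeter-like complex `Δ_{(T,m)}`. -/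
structure Face (G : SimpleGraph V) (m : V → ℕ) (N : ℕ) where
  D : Finset (Sym2 V)
  hD : (D : Set (Sym2 V)) ⊆ G.edgeSet
  lab : Labelling G m N D

/-- `F'` is a subface of `F`. -/
def Subface {G : SimpleGraph V} {m : V → ℕ} {N : ℕ} (F' F : Face G m N) : Prop :=
  ∃ h : F'.D ⊆ F.D, ∀ i : Fin N, F'.lab.g i = compMap G h (F.lab.g i)

/-- `rank` injectively (hence linearly) orders the maximal faces `toFace k`, and this
order is a shelling: any face shared between `toFace k` and an earlier maximal face is
contained in a codimension-one face (one with `d` deleted edges) with the same property. -/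
def IsShellingVia (G : SimpleGraph V) (m : V → ℕ) (N : ℕ) (d : ℕ)
    {ι : Type} (toFace : ι → Face G m N) (rank : ι → ℕ) : Prop :=
  Function.Injective rank ∧
  ∀ (k : ι) (S : Face G m N), Subface S (toFace k) →
    (∃ j, rank j < rank k ∧ Subface S (toFace j)) →
    ∃ S' : Face G m N, S'.D.card = d ∧ Subface S S' ∧ Subface S' (toFace k) ∧
      ∃ j, rank j < rank k ∧ Subface S' (toFace j)

/-- The subcomplex of `Δ_{(T,m)}` whose maximal faces are those satisfying `P`
(all of them having `d + 1` deleted edges) is shellable. -/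
def ShellableOn (G : SimpleGraph V) (m : V → ℕ) (N : ℕ)
    (P : Face G m N → Prop) (d : ℕ) : Prop :=
  ∃ rank : {F : Face G m N // P F} → ℕ,
    IsShellingVia G m N d (fun F => F.1) rank

/-- Two components are adjacent in the contracted tree when some deleted edge joins them. -/
def CompAdj (G : SimpleGraph V) (D : Finset (Sym2 V)) (c c' : Comp G D) : Prop :=
  c ≠ c' ∧ ∃ a b : V, s(a, b) ∈ D ∧ compMk G D a = c ∧ compMk G D b = c'

/-- `τ'` redistributes, between the components `i` and `j`, the labels jointly
assigned by `τ` to `i` and `j`, leaving all other labels unchanged. -/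
def Redistrib {G : SimpleGraph V} {m : V → ℕ} {N : ℕ} {D : Finset (Sym2 V)}
    (τ τ' : Labelling G m N D) (i j : Comp G D) : Prop :=
  (∀ ℓ : Fin N, τ.g ℓ ≠ i → τ.g ℓ ≠ j → τ'.g ℓ = τ.g ℓ) ∧
  (∀ ℓ : Fin N, (τ.g ℓ = i ∨ τ.g ℓ = j) → (τ'.g ℓ = i ∨ τ'.g ℓ = j))

/-- The type of candidate inversion functions: to each face (a deleted edge set `D`
together with a labelling of the contracted tree) assign a set of pairs of components. -/
abbrev InvData (G : SimpleGraph V) (m : V → ℕ) (N : ℕ) : Type :=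
  (D : Finset (Sym2 V)) → Labelling G m N D → Set (Comp G D × Comp G D)

/-- A local sorting step along an edge of `A`: `Step I D A τ' τ` means `τ' = (i,j)τ`
for some inversion pair `(i,j)` of `τ` joined by an edge of `A`. -/
def Step {G : SimpleGraph V} {m : V → ℕ} {N : ℕ} (I : InvData G m N)
    (D A : Finset (Sym2 V)) (τ' τ : Labelling G m N D) : Prop :=
  ∃ i j : Comp G D, (i, j) ∈ I D τ ∧
    (∃ a b : V, s(a, b) ∈ A ∧ compMk G D a = i ∧ compMk G D b = j) ∧
    Redistrib τ τ' i j ∧ (i, j) ∉ I D τ'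

/-- The full deleted edge set, corresponding to facets. -/
def fullD (G : SimpleGraph V) : Finset (Sym2 V) := G.edgeFinset

/-- The facet determined by a labelling of `(T, m)`. -/
def fullFace (G : SimpleGraph V) (m : V → ℕ) (N : ℕ)
    (w : Labelling G m N (fullD G)) : Face G m N :=
  ⟨fullD G, by simp [fullD], w⟩

theorem Face.subset_fullD {G : SimpleGraph V} {m : V → ℕ} {N : ℕ} (F : Face G m N) :
    F.D ⊆ fullD G := fun e he => by
  simpa [fullD, SimpleGraph.mem_edgeFinset] using F.hD he

/-- The facet `w` is inversion-free on its restriction to each component of `F`: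
no inversion pair of `w` has both entries inside a single component of `F`. -/
def InvFreeOnComponents {G : SimpleGraph V} {m : V → ℕ} {N : ℕ} (I : InvData G m N)
    (F : Face G m N) (w : Labelling G m N (fullD G)) : Prop :=
  ∀ p ∈ I (fullD G) w,
    compMap G F.subset_fullD p.1 ≠ compMap G F.subset_fullD p.2

/-- `I` is an inversion function for `(T, m)`. -/
structure IsInversionFunction (G : SimpleGraph V) (m : V → ℕ) (N : ℕ)
    (I : InvData G m N) : Prop where
  /-- `I` assigns pairs of adjacent vertices of the contracted tree. -/
  adj : ∀ D : Finset (Sym2 V), (D : Set (Sym2 V)) ⊆ G.edgeSet →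
    ∀ τ : Labelling G m N D, ∀ p ∈ I D τ, CompAdj G D p.1 p.2
  /-- (i) unique inversion-eliminating redistribution for each adjacent pair. -/
  unique_redistrib : ∀ D : Finset (Sym2 V), (D : Set (Sym2 V)) ⊆ G.edgeSet →
    ∀ (τ : Labelling G m N D) (i j : Comp G D), CompAdj G D i j →
      ∃! τ' : Labelling G m N D, Redistrib τ τ' i j ∧ (i, j) ∉ I D τ'
  /-- (ii) each face lies in a unique facet inversion-free on its components. -/
  unique_facet : ∀ F : Face G m N,
    ∃! w : Labelling G m N (fullD G),
      Subface F (fullFace G m N w) ∧ InvFreeOnComponents I F w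
  /-- (iii), (iv) the transitive closure of the local sorting steps, restricted to any
  subforest (steps along the allowed edges `A`), is a (strict) partial order. -/
  weak_order : ∀ D : Finset (Sym2 V), (D : Set (Sym2 V)) ⊆ G.edgeSet →
    ∀ A ⊆ D, ∀ τ : Labelling G m N D, ¬ Relation.TransGen (Step I D A) τ τ

/-- The degree of a vertex. -/
def deg (G : SimpleGraph V) (v : V) : ℕ := (G.neighborSet v).ncard

/-- The degree of a component of the contracted tree of `(G, E)`:
the number of edges of `E` incident to it. -/
def compDeg (G : SimpleGraph V) (E : Finset (Sym2 V)) (c : Comp G E) : ℕ :=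
  (E.filter (fun e => ∃ v ∈ e, compMk G E v = c)).card

/-- The contracted tree of `(G, E)`, with capacities `m`, has distributable capacity. -/
def ContractedDistributable (G : SimpleGraph V) (m : V → ℕ) (E : Finset (Sym2 V)) : Prop :=
  ∀ c : Comp G E, compDeg G E c - 1 ≤ cap G m E c

/-- The degree, inside the component `U` of `G - E'` containing it, of a component `c`
of the contracted tree of `(U, E|_U)`: the number of edges of `E` with both endpoints
in `U` which are incident to `c`. -/
def compDegWithin (G : SimpleGraph V) (E' E : Finset (Sym2 V)) (c : Comp G (E' ∪ E)) : ℕ :=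
  (E.filter (fun e => (∃ v ∈ e, compMk G (E' ∪ E) v = c) ∧
     (∀ v ∈ e, compMk G E' v = compMap G Finset.subset_union_left c))).card

/-- For every edge set `E'` disjoint from `E` and every connected component `U` of
`G - E'`, the contracted tree of `(U, E|_U)` (with capacities `m`) has distributable
capacity. -/
def RestrictedDistributable (G : SimpleGraph V) (m : V → ℕ) (E : Finset (Sym2 V)) : Prop :=
  ∀ E' : Finset (Sym2 V), (E' : Set (Sym2 V)) ⊆ G.edgeSet → Disjoint E' E →
    ∀ c : Comp G (E' ∪ E), compDegWithin G E' E c - 1 ≤ cap G m (E' ∪ E) c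



section ShellingHelpers

variable {G : SimpleGraph V} {m : V → ℕ} {N : ℕ}

theorem Labelling.ext' {D : Finset (Sym2 V)} {τ τ' : Labelling G m N D}
    (h : τ.g = τ'.g) : τ = τ' := by
  cases τ; cases τ'; cases h; rfl

noncomputable instance compFintype (G : SimpleGraph V) (D : Finset (Sym2 V)) :
    Fintype (Comp G D) := Fintype.ofFinite _

instance labellingFinite (G : SimpleGraph V) (m : V → ℕ) (N : ℕ) (D : Finset (Sym2 V)) :
    Finite (Labelling G m N D) :=
  Finite.of_injective (fun τ => τ.g) (fun _ _ h => Labelling.ext' h)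

theorem compMap_compMk {D' D : Finset (Sym2 V)} (h : D' ⊆ D) (v : V) :
    compMap G h (compMk G D v) = compMk G D' v := rfl

theorem compMap_comp {D'' D' D : Finset (Sym2 V)} (h1 : D'' ⊆ D') (h2 : D' ⊆ D)
    (c : Comp G D) : compMap G h1 (compMap G h2 c) = compMap G (h1.trans h2) c := by
  refine c.ind fun v => rfl

theorem compMk_eq_of_edge {a b : V} {D : Finset (Sym2 V)} (hG : G.Adj a b)
    (hD : s(a, b) ∉ D) : compMk G D a = compMk G D b :=
  SimpleGraph.ConnectedComponent.sound
    (SimpleGraph.Adj.reachable (by rw [SimpleGraph.deleteEdges_adj]; exact ⟨hG, by simpa⟩))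

theorem compMk_ne_of_mem (hacyc : G.IsAcyclic) {a b : V} {D : Finset (Sym2 V)}
    (hadj : G.Adj a b) (hD : s(a, b) ∈ D) : compMk G D a ≠ compMk G D b := by
  intro h
  have hreach : (G.deleteEdges (D : Set (Sym2 V))).Reachable a b :=
    SimpleGraph.ConnectedComponent.eq.mp h
  have hsub : ({s(a, b)} : Set (Sym2 V)) ⊆ (D : Set (Sym2 V)) := by simp [hD]
  have h2 : (G.deleteEdges {s(a, b)}).Reachable a b :=
    hreach.mono (SimpleGraph.deleteEdges_anti hsub)
  have hb := SimpleGraph.isAcyclic_iff_forall_adj_isBridge.mp hacyc hadj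
  exact (SimpleGraph.isBridge_iff.mp hb) h2

theorem sum_fiber_comp {α : Type} [Fintype α] {D' D : Finset (Sym2 V)} (h : D' ⊆ D)
    (f : α → Comp G D) (w : α → ℕ) (c : Comp G D') :
    ∑ a ∈ Finset.univ.filter (fun a => compMap G h (f a) = c), w a
      = ∑ b ∈ Finset.univ.filter (fun b => compMap G h b = c),
          ∑ a ∈ Finset.univ.filter (fun a => f a = b), w a := by
  calc ∑ a ∈ Finset.univ.filter (fun a => compMap G h (f a) = c), w a
      = ∑ a : α, if compMap G h (f a) = c then w a else 0 := by rw [Finset.sum_filter]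
    _ = ∑ a : α, ∑ b ∈ Finset.univ.filter (fun b => compMap G h b = c),
          if f a = b then w a else 0 := by
        refine Finset.sum_congr rfl fun a _ => ?_
        rw [Finset.sum_ite_eq (Finset.univ.filter (fun b => compMap G h b = c)) (f a)
          (fun _ => w a)]
        simp
    _ = ∑ b ∈ Finset.univ.filter (fun b => compMap G h b = c), ∑ a : α,
          if f a = b then w a else 0 := Finset.sum_comm
    _ = _ := Finset.sum_congr rfl fun b _ => (Finset.sum_filter _ _).symm

theorem pushLab_balanced {D' D : Finset (Sym2 V)} (h : D' ⊆ D) (τ : Labelling G m N D)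
    (c : Comp G D') :
    (Finset.univ.filter (fun i => compMap G h (τ.g i) = c)).card = cap G m D' c := by
  calc (Finset.univ.filter (fun i => compMap G h (τ.g i) = c)).card
      = ∑ b ∈ Finset.univ.filter (fun b => compMap G h b = c),
          (Finset.univ.filter (fun i => τ.g i = b)).card := by
        rw [Finset.card_eq_sum_ones, sum_fiber_comp h τ.g (fun _ => 1) c]
        exact Finset.sum_congr rfl fun b _ => (Finset.card_eq_sum_ones _).symm
    _ = ∑ b ∈ Finset.univ.filter (fun b => compMap G h b = c), cap G m D b :=
        Finset.sum_congr rfl fun b _ => τ.balanced b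
    _ = ∑ v ∈ Finset.univ.filter (fun v => compMap G h (compMk G D v) = c), m v := by
        rw [sum_fiber_comp h (compMk G D) m c]
        exact Finset.sum_congr rfl fun b _ => rfl
    _ = cap G m D' c := by
        unfold cap
        refine Finset.sum_congr ?_ fun _ _ => rfl
        ext v
        simp only [Finset.mem_filter, Finset.mem_univ, true_and, compMap_compMk]
        exact Finset.mem_filter.trans (and_iff_right (Finset.mem_univ v))

/-- Push a labelling forward along a coarsening of deleted edge sets. -/
def pushLab {D' D : Finset (Sym2 V)} (h : D' ⊆ D) (τ : Labelling G m N D) :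
    Labelling G m N D' :=
  ⟨fun i => compMap G h (τ.g i), pushLab_balanced h τ⟩

theorem fullD_coe_subset : ((fullD G : Finset (Sym2 V)) : Set (Sym2 V)) ⊆ G.edgeSet := by
  simp [fullD]

theorem descend {I : InvData G m N} (hI : IsInversionFunction G m N I)
    (σ : Labelling G m N (fullD G)) {i j : Comp G (fullD G)}
    (hp : (i, j) ∈ I (fullD G) σ) :
    ∃ (σ' : Labelling G m N (fullD G)) (a b : V),
      s(a, b) ∈ fullD G ∧ compMk G (fullD G) a = i ∧ compMk G (fullD G) b = j ∧
      Redistrib σ σ' i j ∧ (i, j) ∉ I (fullD G) σ' ∧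
      ∀ (D₀ : Finset (Sym2 V)) (h : D₀ ⊆ fullD G), compMap G h i = compMap G h j →
        ∀ ℓ, compMap G h (σ'.g ℓ) = compMap G h (σ.g ℓ) := by
  obtain ⟨hne, a, b, hab, ha, hb⟩ := hI.adj (fullD G) fullD_coe_subset σ (i, j) hp
  obtain ⟨σ', ⟨hred, hni⟩, -⟩ :=
    hI.unique_redistrib (fullD G) fullD_coe_subset σ i j ⟨hne, a, b, hab, ha, hb⟩
  refine ⟨σ', a, b, hab, ha, hb, hred, hni, ?_⟩
  intro D₀ h hc ℓ
  by_cases h1 : σ.g ℓ = i ∨ σ.g ℓ = j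
  · rcases hred.2 ℓ h1 with h2 | h2 <;> rcases h1 with h3 | h3 <;> simp [h2, h3, hc]
  · push_neg at h1
    rw [hred.1 ℓ h1.1 h1.2]

theorem step_mono {I : InvData G m N} {D A A' : Finset (Sym2 V)} (h : A ⊆ A')
    {τ' τ : Labelling G m N D} : Step I D A τ' τ → Step I D A' τ' τ := by
  rintro ⟨i, j, hp, ⟨a, b, hab, ha, hb⟩, hr, hn⟩
  exact ⟨i, j, hp, ⟨a, b, h hab, ha, hb⟩, hr, hn⟩

theorem min_facet {I : InvData G m N} (hI : IsInversionFunction G m N I)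
    (hacyc : G.IsAcyclic) (S : Face G m N) (w : Labelling G m N (fullD G))
    (huniq : ∀ y, (Subface S (fullFace G m N y) ∧ InvFreeOnComponents I S y) → y = w) :
    ∀ σ : Labelling G m N (fullD G), Subface S (fullFace G m N σ) →
      Relation.ReflTransGen (Step I (fullD G) (fullD G \ S.D)) w σ := by
  have hA : fullD G \ S.D ⊆ fullD G := Finset.sdiff_subset
  haveI : IsIrrefl (Labelling G m N (fullD G))
      (Relation.TransGen (Step I (fullD G) (fullD G \ S.D))) :=
    ⟨fun τ hτ => hI.weak_order (fullD G) fullD_coe_subset _ hA τ hτ⟩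
  have hwf := Finite.wellFounded_of_trans_of_irrefl
    (Relation.TransGen (Step I (fullD G) (fullD G \ S.D)))
  intro σ
  refine hwf.induction (C := fun σ => Subface S (fullFace G m N σ) →
    Relation.ReflTransGen (Step I (fullD G) (fullD G \ S.D)) w σ) σ ?_
  clear σ
  intro σ IH hσ
  by_cases hfree : InvFreeOnComponents I S σ
  · rw [huniq σ ⟨hσ, hfree⟩]
  · rw [InvFreeOnComponents] at hfree
    push_neg at hfree
    obtain ⟨⟨i, j⟩, hp, hc⟩ := hfree
    obtain ⟨σ', a, b, hab, ha, hb, hred, hni, hkey⟩ := descend hI σ hp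
    have hAdj : G.Adj a b := by
      have := fullD_coe_subset (G := G) hab
      rwa [SimpleGraph.mem_edgeSet] at this
    have hnotS : s(a, b) ∉ S.D := by
      intro hmem
      apply compMk_ne_of_mem hacyc hAdj hmem
      calc compMk G S.D a = compMap G S.subset_fullD i := by rw [← ha]; rfl
        _ = compMap G S.subset_fullD j := hc
        _ = compMk G S.D b := by rw [← hb]; rfl
    have hstep : Step I (fullD G) (fullD G \ S.D) σ' σ :=
      ⟨i, j, hp, ⟨a, b, Finset.mem_sdiff.mpr ⟨hab, hnotS⟩, ha, hb⟩, hred, hni⟩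
    obtain ⟨hsub, hg⟩ := hσ
    have hσ' : Subface S (fullFace G m N σ') :=
      ⟨hsub, fun ℓ => by rw [hg ℓ]; exact (hkey S.D hsub hc ℓ).symm⟩
    exact (IH σ' (Relation.TransGen.single hstep) hσ').tail hstep

theorem exists_rank {α : Type} [Finite α] (s : α → α → Prop)
    (hirr : ∀ a, ¬ Relation.TransGen s a a) :
    ∃ r : α → ℕ, Function.Injective r ∧
      ∀ a b, Relation.TransGen s a b → r a < r b := by
  haveI := Fintype.ofFinite α
  set n := Fintype.card α with hn
  let e := Fintype.equivFin α
  let r0 : α → ℕ := fun a => (Finset.univ.filter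
      (fun x => Relation.ReflTransGen s x a)).card
  have hr0 : ∀ a b, Relation.TransGen s a b → r0 a < r0 b := by
    intro a b hab
    apply Finset.card_lt_card
    rw [Finset.ssubset_iff_of_subset]
    · refine ⟨b, by
        simp only [Finset.mem_filter, Finset.mem_univ, true_and]
        exact Relation.ReflTransGen.refl, ?_⟩
      simp only [Finset.mem_filter, Finset.mem_univ, true_and]
      intro hba
      exact hirr b (Relation.TransGen.trans_right hba hab)
    · intro x hx
      simp only [Finset.mem_filter, Finset.mem_univ, true_and] at hx ⊢
      exact hx.trans hab.to_reflTransGen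
  let r : α → ℕ := fun a => r0 a * (n + 1) + (e a : ℕ)
  have hlt : ∀ a b, r0 a < r0 b → r a < r b := by
    intro a b h
    have h1 : r a < (r0 a + 1) * (n + 1) := by
      have : (e a : ℕ) < n + 1 := Nat.lt_succ_of_lt (e a).isLt
      calc r a = r0 a * (n + 1) + (e a : ℕ) := rfl
        _ < r0 a * (n + 1) + (n + 1) := by omega
        _ = (r0 a + 1) * (n + 1) := by ring
    have h2 : (r0 a + 1) * (n + 1) ≤ r0 b * (n + 1) := Nat.mul_le_mul_right _ h
    exact lt_of_lt_of_le h1 (le_trans h2 (Nat.le_add_right _ _))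
  refine ⟨r, ?_, fun a b hab => hlt a b (hr0 a b hab)⟩
  intro a b hab
  have h0 : r0 a = r0 b := by
    by_contra hne
    rcases Nat.lt_or_ge (r0 a) (r0 b) with h | h
    · exact absurd hab (Nat.ne_of_lt (hlt a b h))
    · rcases Nat.lt_or_ge (r0 b) (r0 a) with h' | h'
      · exact absurd hab.symm (Nat.ne_of_lt (hlt b a h'))
      · omega
  have he : (e a : ℕ) = (e b : ℕ) := by
    have : r0 a * (n + 1) + (e a : ℕ) = r0 b * (n + 1) + (e b : ℕ) := hab
    rw [h0] at this
    omega
  exact e.injective (Fin.ext he)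

/-- Recover the labelling of a facet of the subcomplex. -/
def toLab {G : SimpleGraph V} {m : V → ℕ} {N : ℕ}
    (F : {F : Face G m N // F.D = fullD G}) : Labelling G m N (fullD G) :=
  F.2 ▸ F.1.lab

theorem fullFace_toLab (F : {F : Face G m N // F.D = fullD G}) :
    fullFace G m N (toLab F) = F.1 := by
  obtain ⟨⟨D, hD, lab⟩, hP⟩ := F
  dsimp only at hP
  subst hP
  rfl

theorem toLab_fullFace (w : Labelling G m N (fullD G)) :
    toLab ⟨fullFace G m N w, rfl⟩ = w := rfl

end ShellingHelpers

/-- If `(T,m)` admits an inversion function `I`, then `Δ_{(T,m)}` is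
shellable; more precisely, any linear extension (injective rank function) of the weak
order associated to `I` orders the facets (the labellings of `(T,m)`) into a shelling. -/
theorem shellable_of_inversion_function
    (G : SimpleGraph V) (hconn : G.Connected) (hacyc : G.IsAcyclic)
    (m : V → ℕ) (N : ℕ) (hN : N = ∑ v : V, m v)
    (I : InvData G m N) (hI : IsInversionFunction G m N I) :
    ShellableOn G m N (fun F => F.D = fullD G) ((fullD G).card - 1) ∧
      ∀ rank : Labelling G m N (fullD G) → ℕ,
        Function.Injective rank →
        (∀ τ τ' : Labelling G m N (fullD G),
          Relation.TransGen (Step I (fullD G) (fullD G)) τ' τ → rank τ' < rank τ) →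
        IsShellingVia G m N ((fullD G).card - 1) (fullFace G m N) rank := by
  have key : ∀ rank : Labelling G m N (fullD G) → ℕ,
      Function.Injective rank →
      (∀ τ τ' : Labelling G m N (fullD G),
        Relation.TransGen (Step I (fullD G) (fullD G)) τ' τ → rank τ' < rank τ) →
      IsShellingVia G m N ((fullD G).card - 1) (fullFace G m N) rank := by
    intro rank hinj hmono
    refine ⟨hinj, ?_⟩
    intro τ S hS hearlier
    obtain ⟨w, hw, huniq⟩ := hI.unique_facet S
    have hmin := min_facet hI hacyc S w (fun y hy => huniq y hy)
    have hτw : τ ≠ w := by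
      rintro rfl
      obtain ⟨σ, hlt, hσS⟩ := hearlier
      have h1 := hmin σ hσS
      rcases Relation.reflTransGen_iff_eq_or_transGen.mp h1 with h2 | h2
      · rw [h2] at hlt; omega
      · have := hmono σ τ (Relation.TransGen.mono (fun _ _ hs => step_mono Finset.sdiff_subset hs) _ _ h2)
        omega
    have hnf : ¬ InvFreeOnComponents I S τ := fun hfree => hτw (huniq τ ⟨hS, hfree⟩)
    rw [InvFreeOnComponents] at hnf
    push_neg at hnf
    obtain ⟨⟨i, j⟩, hp, hc⟩ := hnf
    obtain ⟨σ', a, b, hab, ha, hb, hred, hni, hkey⟩ := descend hI τ hp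
    have hAdj : G.Adj a b := by
      have := fullD_coe_subset (G := G) hab
      rwa [SimpleGraph.mem_edgeSet] at this
    obtain ⟨hsub, hg⟩ := hS
    have hnotS : s(a, b) ∉ S.D := by
      intro hmem
      apply compMk_ne_of_mem hacyc hAdj hmem
      calc compMk G S.D a = compMap G S.subset_fullD i := by rw [← ha]; rfl
        _ = compMap G S.subset_fullD j := hc
        _ = compMk G S.D b := by rw [← hb]; rfl
    have hD'sub : (fullD G).erase s(a, b) ⊆ fullD G := Finset.erase_subset _ _
    have hD'E : (((fullD G).erase s(a, b) : Finset (Sym2 V)) : Set (Sym2 V)) ⊆ G.edgeSet :=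
      fun e he => fullD_coe_subset (hD'sub (by exact_mod_cast he))
    refine ⟨⟨(fullD G).erase s(a, b), hD'E, pushLab hD'sub τ⟩, ?_, ?_, ?_, ?_⟩
    · exact Finset.card_erase_of_mem hab
    · have hSD' : S.D ⊆ (fullD G).erase s(a, b) := Finset.subset_erase.mpr ⟨hsub, hnotS⟩
      refine ⟨hSD', fun ℓ => ?_⟩
      rw [hg ℓ]
      exact (compMap_comp hSD' hD'sub (τ.g ℓ)).symm
    · exact ⟨hD'sub, fun ℓ => rfl⟩
    · have hcD' : compMap G hD'sub i = compMap G hD'sub j := by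
        rw [← ha, ← hb, compMap_compMk, compMap_compMk]
        exact compMk_eq_of_edge hAdj (Finset.notMem_erase _ _)
      refine ⟨σ', hmono τ σ'
        (Relation.TransGen.single ⟨i, j, hp, ⟨a, b, hab, ha, hb⟩, hred, hni⟩),
        hD'sub, fun ℓ => (hkey _ hD'sub hcD' ℓ).symm⟩
  refine ⟨?_, key⟩
  obtain ⟨r, hrinj, hrmono⟩ := exists_rank (Step I (fullD G) (fullD G))
    (fun τ => hI.weak_order (fullD G) fullD_coe_subset (fullD G) (Finset.Subset.refl _) τ)
  have main := key r hrinj (fun τ τ' h => hrmono τ' τ h)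
  refine ⟨fun F => r (toLab F), ?_, ?_⟩
  · intro F1 F2 h
    have h2 := hrinj h
    exact Subtype.ext (by rw [← fullFace_toLab F1, ← fullFace_toLab F2, h2])
  · intro k S hS hex
    have hS' : Subface S (fullFace G m N (toLab k)) := (fullFace_toLab k).symm ▸ hS
    have hex' : ∃ j, r j < r (toLab k) ∧ Subface S (fullFace G m N j) := by
      obtain ⟨j, hj1, hj2⟩ := hex
      exact ⟨toLab j, hj1, (fullFace_toLab j).symm ▸ hj2⟩
    obtain ⟨S', hcard, h1, h2, j, hjlt, hj⟩ := main.2 (toLab k) S hS' hex'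
    exact ⟨S', hcard, h1, show Subface S' (k.1) from fullFace_toLab k ▸ h2,
      ⟨fullFace G m N j, rfl⟩, hjlt, hj⟩


end
end

section
/- Let T be a finite tree with at least two vertices, rooted at a leaf r (so every vertex other than r has a unique parent, and the children of a vertex v are its neighbors other than its parent). Suppose that for each vertex v having at least one child a single child c(v) is chosen, and let E be the set of edges {v, c(v)} over all such v. Then, taking all vertex capacities equal to 1: (a) the contracted tree of (T,E) has distributable capacity; and (b) for every set E' of edges of T disjoint from E and every connected component U of the forest T - E', the contracted tree of (U, E restricted to U) has distributable capacity. -/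
set_option linter.unusedSectionVars false

open scoped Classical

noncomputable section

variable {V : Type} [Fintype V] [DecidableEq V]

namespace StmtSix

/-- concatenating a new vertex to a path gives a path. -/
lemma concat_isPath {G : SimpleGraph V} {u v w : V} {p : G.Walk u v} (hp : p.IsPath)
    (h : G.Adj v w) (hw : w ∉ p.support) : (p.concat h).IsPath := by
  rw [← SimpleGraph.Walk.isPath_reverse_iff, SimpleGraph.Walk.reverse_concat]
  rw [SimpleGraph.Walk.cons_isPath_iff]
  exact ⟨hp.reverse, by simpa using hw⟩

/-- every vertex on a walk from r has dist-from-r at most the walk's length. -/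
lemma dist_le_of_mem_support {G : SimpleGraph V} {r u x : V} (p : G.Walk r u)
    (hx : x ∈ p.support) : G.dist r x ≤ p.length := by
  calc G.dist r x ≤ (p.takeUntil x hx).length := SimpleGraph.dist_le _
    _ ≤ p.length := SimpleGraph.Walk.length_takeUntil_le _ _

/-- a shortest path from r to p avoiding any vertex farther from r. -/
lemma exists_geodesic_avoiding {G : SimpleGraph V} (hconn : G.Connected) (r p u : V)
    (hd : G.dist r p < G.dist r u) :
    ∃ b : G.Walk r p, b.IsPath ∧ b.length = G.dist r p ∧ u ∉ b.support := by
  obtain ⟨w, hw⟩ := hconn.exists_walk_length_eq_dist r p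
  refine ⟨w.bypass, w.bypass_isPath, le_antisymm ?_ (SimpleGraph.dist_le _), fun hu => ?_⟩
  · calc w.bypass.length ≤ w.length := SimpleGraph.Walk.length_bypass_le _
      _ = G.dist r p := hw
  · have h1 := dist_le_of_mem_support w.bypass hu
    have h2 : w.bypass.length ≤ G.dist r p :=
      hw ▸ SimpleGraph.Walk.length_bypass_le _
    omega

/-- unique parent: in a tree, a vertex has at most one neighbour strictly closer
to the root. -/
lemma unique_parent {G : SimpleGraph V} (hconn : G.Connected) (hacyc : G.IsAcyclic)
    {r u v1 v2 : V} (h1 : G.Adj v1 u) (h2 : G.Adj v2 u)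
    (hd1 : G.dist r u = G.dist r v1 + 1) (hd2 : G.dist r u = G.dist r v2 + 1) :
    v1 = v2 := by
  obtain ⟨b1, hb1p, hb1l, hb1u⟩ := exists_geodesic_avoiding hconn r v1 u (by omega)
  obtain ⟨b2, hb2p, hb2l, hb2u⟩ := exists_geodesic_avoiding hconn r v2 u (by omega)
  have hpq : (⟨b1.concat h1, concat_isPath hb1p h1 hb1u⟩ : G.Path r u) =
      ⟨b2.concat h2, concat_isPath hb2p h2 hb2u⟩ := hacyc.path_unique _ _
  have : b1.concat h1 = b2.concat h2 := congrArg Subtype.val hpq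
  obtain ⟨hv, -⟩ := SimpleGraph.Walk.concat_inj this
  exact hv

/-- key geometric lemma: if `u1` and `u2` are in the same component of `G - D`,
`u2 ≠ u1`, and the tree-edge from `u2` to its parent `p2` lies in `D`, then
`u2` is strictly closer to the root than `u1`. -/
lemma dist_lt_of_same_comp {G : SimpleGraph V} (hconn : G.Connected) (hacyc : G.IsAcyclic)
    {D : Finset (Sym2 V)} {r u1 u2 p2 : V}
    (hcomp : compMk G D u1 = compMk G D u2) (hne : u2 ≠ u1)
    (h2 : G.Adj p2 u2) (hd2 : G.dist r u2 = G.dist r p2 + 1)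
    (hD : s(p2, u2) ∈ D) :
    G.dist r u2 < G.dist r u1 := by
  -- a walk from u1 to u2 avoiding D
  obtain ⟨W⟩ := (SimpleGraph.ConnectedComponent.eq.mp hcomp)
  let q : G.Walk u1 u2 := W.transfer G (fun e he => by
    have := W.edges_subset_edgeSet he
    rw [SimpleGraph.edgeSet_deleteEdges] at this
    exact this.1)
  have hq : ∀ e ∈ q.edges, e ∉ D := by
    intro e he
    have heW : e ∈ W.edges := by
      rwa [SimpleGraph.Walk.edges_transfer] at he
    have := W.edges_subset_edgeSet heW
    rw [SimpleGraph.edgeSet_deleteEdges] at this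
    simpa using this.2
  -- a geodesic path from r to u1
  obtain ⟨w1, hw1⟩ := hconn.exists_walk_length_eq_dist r u1
  have hb1p := w1.bypass_isPath
  have hb1l : w1.bypass.length = G.dist r u1 :=
    le_antisymm (hw1 ▸ SimpleGraph.Walk.length_bypass_le _) (SimpleGraph.dist_le _)
  -- a geodesic path from r to u2 through p2
  obtain ⟨b2, hb2p, hb2l, hb2u⟩ := exists_geodesic_avoiding hconn r p2 u2 (by omega)
  -- the bypass of (b1 ++ q) equals that geodesic, by uniqueness of paths
  have hpq : (⟨(w1.bypass.append q).bypass, (w1.bypass.append q).bypass_isPath⟩ :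
      G.Path r u2) = ⟨b2.concat h2, concat_isPath hb2p h2 hb2u⟩ := hacyc.path_unique _ _
  have hwalkeq : (w1.bypass.append q).bypass = b2.concat h2 := congrArg Subtype.val hpq
  have hmem : s(p2, u2) ∈ (w1.bypass.append q).bypass.edges := by
    rw [hwalkeq, SimpleGraph.Walk.edges_concat]
    simp
  have hmem2 : s(p2, u2) ∈ w1.bypass.edges ++ q.edges := by
    have := (w1.bypass.append q).edges_bypass_subset hmem
    rwa [SimpleGraph.Walk.edges_append] at this
  have hmem3 : s(p2, u2) ∈ w1.bypass.edges := by
    rcases List.mem_append.mp hmem2 with h | h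
    · exact h
    · exact absurd hD (hq _ h)
  have hu2 : u2 ∈ w1.bypass.support := w1.bypass.snd_mem_support_of_mem_edges hmem3
  -- strict inequality
  have htake : G.dist r u2 ≤ (w1.bypass.takeUntil u2 hu2).length := SimpleGraph.dist_le _
  have hsplit : (w1.bypass.takeUntil u2 hu2).length
      + (w1.bypass.dropUntil u2 hu2).length = w1.bypass.length := by
    rw [← SimpleGraph.Walk.length_append, SimpleGraph.Walk.take_spec]
  have hdrop : (w1.bypass.dropUntil u2 hu2).length ≠ 0 := fun h0 =>
    hne (SimpleGraph.Walk.eq_of_length_eq_zero h0)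
  omega

/-- The main counting lemma: the number of edges of `E` incident to a component `c`
of `G - D` (for any `D ⊇ E`) is at most the number of vertices of `c` plus `1`. -/
lemma main_count (G : SimpleGraph V) (hconn : G.Connected) (hacyc : G.IsAcyclic)
    (r : V) (f : V → V)
    (hf : ∀ v : V, (∃ w : V, G.Adj v w ∧ G.dist r w = G.dist r v + 1) →
      G.Adj v (f v) ∧ G.dist r (f v) = G.dist r v + 1)
    (E : Finset (Sym2 V))
    (hE : E = (Finset.univ.filter
        (fun v : V => ∃ w : V, G.Adj v w ∧ G.dist r w = G.dist r v + 1)).image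
        (fun v => s(v, f v)))
    (D : Finset (Sym2 V)) (hED : E ⊆ D) (c : Comp G D) :
    (E.filter (fun e => ∃ v ∈ e, compMk G D v = c)).card ≤ cap G (fun _ => 1) D c + 1 := by
  classical
  set P : V → Prop := fun v => ∃ w : V, G.Adj v w ∧ G.dist r w = G.dist r v + 1 with hP
  set A : Finset V := Finset.univ.filter P with hA
  set g : V → Sym2 V := fun v => s(v, f v) with hg
  set Q : Sym2 V → Prop := fun e => ∃ v ∈ e, compMk G D v = c with hQ
  set S : Finset V := Finset.univ.filter (fun v => compMk G D v = c) with hS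
  -- capacity is the number of vertices
  have hcap : cap G (fun _ => 1) D c = S.card := by
    simp [cap, hS]
  -- g is injective on A
  have hginj : Set.InjOn g A := by
    intro v1 hv1 v2 hv2 hgeq
    have h1 := hf v1 (by simpa [hA, hP] using hv1)
    have h2 := hf v2 (by simpa [hA, hP] using hv2)
    rcases Sym2.eq_iff.mp hgeq with ⟨h, -⟩ | ⟨ha, hb⟩
    · exact h
    · exfalso
      rw [← ha] at h2
      rw [hb] at h1
      omega
  have hEfilter : E.filter Q = (A.filter (fun v => Q (g v))).image g := by
    rw [hE, Finset.filter_image]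
  have hcardeq : (E.filter Q).card = (A.filter (fun v => Q (g v))).card := by
    rw [hEfilter]
    exact Finset.card_image_of_injOn (hginj.mono (fun v hv => Finset.mem_filter.mp hv |>.1))
  set A' : Finset V := A.filter (fun v => Q (g v)) with hA'
  -- the endpoint-in-c map
  set ψ : V → V := fun v => if compMk G D v = c then v else f v with hψ
  have hψS : ∀ v ∈ A', ψ v ∈ S := by
    intro v hv
    obtain ⟨hvA, hvQ⟩ := Finset.mem_filter.mp hv
    obtain ⟨u, hu, huc⟩ := hvQ
    rw [hψ]
    by_cases hvc : compMk G D v = c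
    · simp [hvc, hS]
    · rcases Sym2.mem_iff.mp hu with h | h
      · exact absurd (h ▸ huc) hvc
      · simp [hvc, hS, h ▸ huc]
  have hfib := Finset.card_eq_sum_card_fiberwise hψS
  -- the "top" predicate
  set TopP : V → Prop := fun u => ∃ p : V, G.Adj p u ∧ G.dist r u = G.dist r p + 1 ∧
    s(p, u) ∈ D with hTopP
  -- fiber bounds
  have hfibbound : ∀ u ∈ S, (A'.filter (fun v => ψ v = u)).card ≤
      1 + (if TopP u then 1 else 0) := by
    intro u huS
    set fib := A'.filter (fun v => ψ v = u) with hfibdef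
    have hsplit := Finset.card_filter_add_card_filter_not
      (s := fib) (p := fun v => v = u)
    have h1 : (fib.filter (fun v => v = u)).card ≤ 1 := by
      apply Finset.card_le_one.mpr
      intro a ha b hb
      have := (Finset.mem_filter.mp ha).2
      have := (Finset.mem_filter.mp hb).2
      simp_all
    -- elements of the fiber different from u are "outside parents" of u
    have hout : ∀ v ∈ fib, ¬(v = u) → G.Adj v u ∧ G.dist r u = G.dist r v + 1 ∧
        s(v, u) ∈ D := by
      intro v hv hvne
      obtain ⟨hvA', hvψ⟩ := Finset.mem_filter.mp hv
      obtain ⟨hvA, -⟩ := Finset.mem_filter.mp hvA'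
      have hPv : P v := by simpa [hA] using hvA
      have hfv := hf v hPv
      have hfvu : f v = u := by
        by_cases hvc : compMk G D v = c
        · exact absurd (by simpa [hψ, hvc] using hvψ) hvne
        · simpa [hψ, hvc] using hvψ
      refine ⟨hfvu ▸ hfv.1, by rw [← hfvu]; omega, ?_⟩
      have : s(v, f v) ∈ E := by
        rw [hE]
        exact Finset.mem_image.mpr ⟨v, Finset.mem_filter.mpr ⟨Finset.mem_univ _, hPv⟩, rfl⟩
      exact hED (hfvu ▸ this)
    have h2 : (fib.filter (fun v => ¬(v = u))).card ≤ if TopP u then 1 else 0 := by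
      by_cases htop : TopP u
      · rw [if_pos htop]
        apply Finset.card_le_one.mpr
        intro a ha b hb
        obtain ⟨haf, hane⟩ := Finset.mem_filter.mp ha
        obtain ⟨hbf, hbne⟩ := Finset.mem_filter.mp hb
        obtain ⟨ha1, ha2, -⟩ := hout a haf hane
        obtain ⟨hb1, hb2, -⟩ := hout b hbf hbne
        exact unique_parent hconn hacyc ha1 hb1 ha2 hb2
      · rw [if_neg htop, Nat.le_zero, Finset.card_eq_zero, Finset.filter_eq_empty_iff]
        intro v hv hvne
        obtain ⟨h1', h2', h3'⟩ := hout v hv hvne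
        exact htop ⟨v, h1', h2', h3'⟩
    omega
  -- at most one top vertex in S
  have htopcard : (S.filter TopP).card ≤ 1 := by
    apply Finset.card_le_one.mpr
    intro u1 hu1 u2 hu2
    obtain ⟨hu1S, p1, hp1a, hp1d, hp1D⟩ := Finset.mem_filter.mp hu1
    obtain ⟨hu2S, p2, hp2a, hp2d, hp2D⟩ := Finset.mem_filter.mp hu2
    have hc1 : compMk G D u1 = c := by simpa [hS] using hu1S
    have hc2 : compMk G D u2 = c := by simpa [hS] using hu2S
    by_contra hne
    have hlt1 : G.dist r u2 < G.dist r u1 :=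
      dist_lt_of_same_comp hconn hacyc (hc1.trans hc2.symm) (Ne.symm hne) hp2a hp2d hp2D
    have hlt2 : G.dist r u1 < G.dist r u2 :=
      dist_lt_of_same_comp hconn hacyc (hc2.trans hc1.symm) hne hp1a hp1d hp1D
    omega
  -- putting it together
  calc (E.filter Q).card = A'.card := hcardeq
    _ = ∑ u ∈ S, (A'.filter (fun v => ψ v = u)).card := hfib
    _ ≤ ∑ u ∈ S, (1 + if TopP u then 1 else 0) := Finset.sum_le_sum hfibbound
    _ = S.card + (S.filter TopP).card := by
        rw [Finset.sum_add_distrib, Finset.card_filter]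
        simp
        exact congrArg (S.card + ·) (Finset.card_filter TopP S).symm
    _ ≤ cap G (fun _ => 1) D c + 1 := by omega

end StmtSix

/-- Let `T` be a tree with at least two vertices rooted at a leaf `r`,
and for each vertex `v` having at least one child let a child `f v` be chosen; let `E`
be the set of the resulting edges `{v, f v}`. Then, with all capacities `1`: (a) the
contracted tree of `(T,E)` has distributable capacity, and (b) for every edge set `E'`
disjoint from `E` and every connected component `U` of `T - E'`, the contracted tree of
`(U, E|_U)` has distributable capacity. -/
theorem first_children_edge_set_distributable
    (G : SimpleGraph V) (hconn : G.Connected) (hacyc : G.IsAcyclic)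
    (hcard : 2 ≤ Fintype.card V)
    (r : V) (hr : deg G r = 1)
    (f : V → V)
    (hf : ∀ v : V, (∃ w : V, G.Adj v w ∧ G.dist r w = G.dist r v + 1) →
      G.Adj v (f v) ∧ G.dist r (f v) = G.dist r v + 1)
    (E : Finset (Sym2 V))
    (hE : E = (Finset.univ.filter
        (fun v : V => ∃ w : V, G.Adj v w ∧ G.dist r w = G.dist r v + 1)).image
        (fun v => s(v, f v))) :
    ContractedDistributable G (fun _ => 1) E ∧
      RestrictedDistributable G (fun _ => 1) E := by
  constructor
  · intro c
    have := StmtSix.main_count G hconn hacyc r f hf E hE E (le_refl E) c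
    have hdeg : compDeg G E c = (E.filter (fun e => ∃ v ∈ e, compMk G E v = c)).card := rfl
    omega
  · intro E' hE' hdisj c
    have hmain := StmtSix.main_count G hconn hacyc r f hf E hE (E' ∪ E)
      Finset.subset_union_right c
    have hsub : compDegWithin G E' E c ≤
        (E.filter (fun e => ∃ v ∈ e, compMk G (E' ∪ E) v = c)).card := by
      apply Finset.card_le_card
      intro e he
      rw [Finset.mem_filter] at he ⊢
      exact ⟨he.1, he.2.1⟩
    omega

end
end
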